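/- Let p be a prime, n ≥ 1, and let A(n, p) be the group of all 3×3 lower unitriangular matrices [[1,0,0],[a,1,0],[b,c,1]] with entries a, b, c in the field GF(p^n), under matrix multiplication. Then the energy of the commuting graph is E(Γ_{A(n, p)}) = 2p^{3n} − 4p^n − 2. -/

import Mathlib

open scoped Classical

/-- The commuting graph of a group `G`: its vertices are the non-central
elements of `G`, and two distinct vertices are adjacent iff they commute. -/
noncomputable def commGraph (G : Type*) [Group G] :
    SimpleGraph {g : G // g ∉ Subgroup.center G} where
  Adj x y := x ≠ y ∧ (x : G) * y = (y : G) * x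
  symm := ⟨fun _ _ h => ⟨h.1.symm, h.2.symm⟩⟩
  loopless := ⟨fun _ h => h.1 rfl⟩

lemma adjMatrix_isHermitian {V : Type*} [Fintype V] (Γ : SimpleGraph V) :
    (Γ.adjMatrix ℝ).IsHermitian := by
  ext i j
  simp [Matrix.conjTranspose_apply, SimpleGraph.adj_comm]

/-- The energy of a finite graph: the sum of the absolute values of the
eigenvalues of its adjacency matrix. -/
noncomputable def graphEnergy {V : Type*} [Fintype V] (Γ : SimpleGraph V) : ℝ :=
  ∑ i, |(adjMatrix_isHermitian Γ).eigenvalues i|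

noncomputable instance (p n : ℕ) [Fact p.Prime] : Fintype (GaloisField p n) :=
  Fintype.ofFinite _

/-- The underlying set of the group `A(n, p)` of all lower unitriangular matrices
`V(a, b, c) = [[1,0,0],[a,1,0],[b,c,1]]` with `a, b, c ∈ GF(p^n)`; an element
`(a, b, c)` represents the matrix `V(a, b, c)`. -/
abbrev UnitriangularGroup (p n : ℕ) [Fact p.Prime] : Type :=
  GaloisField p n × GaloisField p n × GaloisField p n

/-- The group structure of `A(n, p)`, given by the matrix multiplication rule
`V(a, b, c) · V(a', b', c') = V(a + a', b + b' + c a', c + c')`. -/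
noncomputable instance (p n : ℕ) [Fact p.Prime] : Group (UnitriangularGroup p n) where
  mul x y := ⟨x.1 + y.1, x.2.1 + y.2.1 + x.2.2 * y.1, x.2.2 + y.2.2⟩
  one := ⟨0, 0, 0⟩
  inv x := ⟨-x.1, x.2.2 * x.1 - x.2.1, -x.2.2⟩
  div x y := ⟨x.1 + -y.1, x.2.1 + (y.2.2 * y.1 - y.2.1) + x.2.2 * -y.1, x.2.2 + -y.2.2⟩
  npow n x := @npowRec _ ⟨⟨0, 0, 0⟩⟩
    ⟨fun x y => ⟨x.1 + y.1, x.2.1 + y.2.1 + x.2.2 * y.1, x.2.2 + y.2.2⟩⟩ n x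
  zpow n x := @zpowRec _ ⟨⟨0, 0, 0⟩⟩
    ⟨fun x y => ⟨x.1 + y.1, x.2.1 + y.2.1 + x.2.2 * y.1, x.2.2 + y.2.2⟩⟩
    ⟨fun x => ⟨-x.1, x.2.2 * x.1 - x.2.1, -x.2.2⟩⟩
    (@npowRec _ ⟨⟨0, 0, 0⟩⟩
      ⟨fun x y => ⟨x.1 + y.1, x.2.1 + y.2.1 + x.2.2 * y.1, x.2.2 + y.2.2⟩⟩) n x
  div_eq_mul_inv _ _ := rfl
  mul_assoc x y z := by
    refine Prod.ext ?_ (Prod.ext ?_ ?_)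
    · exact add_assoc _ _ _
    · show (x.2.1 + y.2.1 + x.2.2 * y.1) + z.2.1 + (x.2.2 + y.2.2) * z.1 =
        x.2.1 + (y.2.1 + z.2.1 + y.2.2 * z.1) + x.2.2 * (y.1 + z.1)
      ring
    · exact add_assoc _ _ _
  one_mul x := by
    refine Prod.ext ?_ (Prod.ext ?_ ?_)
    · exact zero_add _
    · show (0 : GaloisField p n) + x.2.1 + (0 : GaloisField p n) * x.1 = x.2.1
      ring
    · exact zero_add _
  mul_one x := by
    refine Prod.ext ?_ (Prod.ext ?_ ?_)
    · exact add_zero _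
    · show x.2.1 + 0 + x.2.2 * (0 : GaloisField p n) = x.2.1
      ring
    · exact add_zero _
  inv_mul_cancel x := by
    refine Prod.ext ?_ (Prod.ext ?_ ?_)
    · exact neg_add_cancel _
    · show (x.2.2 * x.1 - x.2.1) + x.2.1 + (-x.2.2) * x.1 = 0
      ring
    · exact neg_add_cancel _

/-! ### Auxiliary lemmas -/

lemma UT.cross_trans {F : Type*} [Field F] {a1 a2 b1 b2 c1 c2 : F} (hb : ¬(b1 = 0 ∧ b2 = 0))
    (h1 : a2 * b1 = b2 * a1) (h2 : b2 * c1 = c2 * b1) : a2 * c1 = c2 * a1 := by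
  by_cases hb1 : b1 = 0
  · have hb2 : b2 ≠ 0 := fun h => hb ⟨hb1, h⟩
    subst hb1
    have ha1 : a1 = 0 := by
      have h' : b2 * a1 = 0 := by linear_combination -h1
      exact (mul_eq_zero.mp h').resolve_left hb2
    have hc1 : c1 = 0 := by
      have h' : b2 * c1 = 0 := by linear_combination h2
      exact (mul_eq_zero.mp h').resolve_left hb2
    rw [ha1, hc1]; ring
  · apply mul_right_cancel₀ hb1
    linear_combination c1 * h1 + a1 * h2

lemma UT.card_line {F : Type*} [Field F] [Fintype F] (a c : F) (h : ¬(a = 0 ∧ c = 0)) :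
    Fintype.card {u : F × F // c * u.1 = u.2 * a} = Fintype.card F := by
  by_cases ha : a = 0
  · have hc : c ≠ 0 := fun h' => h ⟨ha, h'⟩
    subst ha
    refine Fintype.card_congr ⟨fun u => u.1.2, fun s => ⟨(0, s), by simp⟩, ?_, fun s => rfl⟩
    rintro ⟨⟨u1, u2⟩, hu⟩
    have h0 : u1 = 0 := by
      have : c * u1 = 0 := by simpa using hu
      exact (mul_eq_zero.mp this).resolve_left hc
    simp [h0]
  · refine Fintype.card_congr
      ⟨fun u => u.1.1, fun t => ⟨(t, c * t * a⁻¹), by field_simp⟩, ?_, fun t => rfl⟩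
    rintro ⟨⟨u1, u2⟩, hu⟩
    have h0 : c * u1 * a⁻¹ = u2 := by field_simp; linear_combination hu
    simp [h0]

section UT

variable {p n : ℕ} [Fact p.Prime]

lemma UT.mem_center_iff (g : UnitriangularGroup p n) :
    g ∈ Subgroup.center (UnitriangularGroup p n) ↔ g.1 = 0 ∧ g.2.2 = 0 := by
  rw [Subgroup.mem_center_iff]
  constructor
  · intro h
    have key : ∀ y : UnitriangularGroup p n,
        y.2.1 + g.2.1 + y.2.2 * g.1 = g.2.1 + y.2.1 + g.2.2 * y.1 :=
      fun y => congrArg (fun z : UnitriangularGroup p n => z.2.1) (h y)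
    have k1 := key (0, 0, 1)
    have k2 := key (1, 0, 0)
    simp only at k1 k2
    constructor
    · linear_combination k1
    · linear_combination -k2
  · rintro ⟨h1, h2⟩ y
    refine Prod.ext ?_ (Prod.ext ?_ ?_)
    · exact add_comm _ _
    · show y.2.1 + g.2.1 + y.2.2 * g.1 = g.2.1 + y.2.1 + g.2.2 * y.1
      rw [h1, h2]; ring
    · exact add_comm _ _

lemma UT.adj_iff
    (x y : {g : UnitriangularGroup p n // g ∉ Subgroup.center (UnitriangularGroup p n)}) :
    (commGraph (UnitriangularGroup p n)).Adj x y ↔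
      x ≠ y ∧ (x : UnitriangularGroup p n).2.2 * (y : UnitriangularGroup p n).1 =
        (y : UnitriangularGroup p n).2.2 * (x : UnitriangularGroup p n).1 := by
  constructor
  · intro h
    unfold commGraph at h
    have hne : x ≠ y := h.1
    have h2 : (x : UnitriangularGroup p n).2.1 + (y : UnitriangularGroup p n).2.1 +
        (x : UnitriangularGroup p n).2.2 * (y : UnitriangularGroup p n).1 =
        (y : UnitriangularGroup p n).2.1 + (x : UnitriangularGroup p n).2.1 +
        (y : UnitriangularGroup p n).2.2 * (x : UnitriangularGroup p n).1 :=
      congrArg (fun z : UnitriangularGroup p n => z.2.1) h.2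
    exact ⟨hne, by linear_combination h2⟩
  · rintro ⟨hne, h⟩
    have hmid : (x : UnitriangularGroup p n).2.1 + (y : UnitriangularGroup p n).2.1 +
        (x : UnitriangularGroup p n).2.2 * (y : UnitriangularGroup p n).1 =
        (y : UnitriangularGroup p n).2.1 + (x : UnitriangularGroup p n).2.1 +
        (y : UnitriangularGroup p n).2.2 * (x : UnitriangularGroup p n).1 := by
      linear_combination h
    unfold commGraph
    exact And.intro hne (Prod.ext (add_comm _ _) (Prod.ext hmid (add_comm _ _)))

lemma UT.card_cond (g : UnitriangularGroup p n) (hg : ¬(g.1 = 0 ∧ g.2.2 = 0)) :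
    Fintype.card {y : UnitriangularGroup p n // g.2.2 * y.1 = y.2.2 * g.1} =
      Fintype.card (GaloisField p n) * Fintype.card (GaloisField p n) := by
  have e : {y : UnitriangularGroup p n // g.2.2 * y.1 = y.2.2 * g.1} ≃
      {u : GaloisField p n × GaloisField p n // g.2.2 * u.1 = u.2 * g.1} × GaloisField p n :=
    { toFun := fun y => (⟨(y.1.1, y.1.2.2), y.2⟩, y.1.2.1)
      invFun := fun z => ⟨(z.1.1.1, z.2, z.1.1.2), z.1.2⟩
      left_inv := fun y => rfl
      right_inv := fun z => rfl }
  rw [Fintype.card_congr e, Fintype.card_prod, UT.card_line g.1 g.2.2 hg]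

lemma UT.card_cond_center (g : UnitriangularGroup p n) :
    Fintype.card {y : UnitriangularGroup p n //
        (g.2.2 * y.1 = y.2.2 * g.1) ∧ y ∈ Subgroup.center (UnitriangularGroup p n)} =
      Fintype.card (GaloisField p n) := by
  refine Fintype.card_congr
    ⟨fun y => y.1.2.1, fun b => ⟨(0, b, 0), by simp, (UT.mem_center_iff _).mpr ⟨rfl, rfl⟩⟩,
     ?_, fun b => rfl⟩
  rintro ⟨⟨y1, y2, y3⟩, hy, hc⟩
  obtain ⟨e1, e3⟩ := (UT.mem_center_iff _).mp hc
  simp only at e1 e3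
  subst e1; subst e3; rfl

lemma UT.card_center :
    Fintype.card {y : UnitriangularGroup p n // y ∈ Subgroup.center (UnitriangularGroup p n)} =
      Fintype.card (GaloisField p n) := by
  refine Fintype.card_congr
    ⟨fun y => y.1.2.1, fun b => ⟨(0, b, 0), (UT.mem_center_iff _).mpr ⟨rfl, rfl⟩⟩,
     ?_, fun b => rfl⟩
  rintro ⟨⟨y1, y2, y3⟩, hc⟩
  obtain ⟨e1, e3⟩ := (UT.mem_center_iff _).mp hc
  simp only at e1 e3
  subst e1; subst e3; rfl

end UT

section UT2

variable {p n : ℕ} [Fact p.Prime]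

/-- The "closed clique" of a vertex: all vertices whose `(a, c)`-vector is
proportional to that of `x`. -/
noncomputable def UT.Cf
    (x : {g : UnitriangularGroup p n // g ∉ Subgroup.center (UnitriangularGroup p n)}) :
    Finset {g : UnitriangularGroup p n // g ∉ Subgroup.center (UnitriangularGroup p n)} :=
  Finset.univ.filter (fun z => (x : UnitriangularGroup p n).2.2 * (z : UnitriangularGroup p n).1 =
    (z : UnitriangularGroup p n).2.2 * (x : UnitriangularGroup p n).1)

lemma UT.mem_Cf (x z : {g : UnitriangularGroup p n // g ∉ Subgroup.center (UnitriangularGroup p n)}) :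
    z ∈ UT.Cf x ↔ (x : UnitriangularGroup p n).2.2 * (z : UnitriangularGroup p n).1 =
      (z : UnitriangularGroup p n).2.2 * (x : UnitriangularGroup p n).1 := by
  simp [UT.Cf]

lemma UT.vertex_ne (x : {g : UnitriangularGroup p n // g ∉ Subgroup.center (UnitriangularGroup p n)}) :
    ¬((x : UnitriangularGroup p n).1 = 0 ∧ (x : UnitriangularGroup p n).2.2 = 0) :=
  fun h => x.2 ((UT.mem_center_iff _).mpr h)

lemma UT.cond_trans (x y z : {g : UnitriangularGroup p n // g ∉ Subgroup.center (UnitriangularGroup p n)})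
    (hxy : (x : UnitriangularGroup p n).2.2 * (y : UnitriangularGroup p n).1 =
      (y : UnitriangularGroup p n).2.2 * (x : UnitriangularGroup p n).1)
    (hyz : (y : UnitriangularGroup p n).2.2 * (z : UnitriangularGroup p n).1 =
      (z : UnitriangularGroup p n).2.2 * (y : UnitriangularGroup p n).1) :
    (x : UnitriangularGroup p n).2.2 * (z : UnitriangularGroup p n).1 =
      (z : UnitriangularGroup p n).2.2 * (x : UnitriangularGroup p n).1 :=
  UT.cross_trans (UT.vertex_ne y) hxy hyz

lemma UT.card_Cf (x : {g : UnitriangularGroup p n // g ∉ Subgroup.center (UnitriangularGroup p n)}) :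
    (UT.Cf x).card + Fintype.card (GaloisField p n) =
      Fintype.card (GaloisField p n) * Fintype.card (GaloisField p n) := by
  classical
  have h1 : Fintype.card {y : UnitriangularGroup p n //
      (x : UnitriangularGroup p n).2.2 * y.1 = y.2.2 * (x : UnitriangularGroup p n).1} =
      Fintype.card (GaloisField p n) * Fintype.card (GaloisField p n) :=
    UT.card_cond _ (UT.vertex_ne x)
  have h2 := UT.card_cond_center (p := p) (n := n) (x : UnitriangularGroup p n)
  have hsplit := Finset.card_filter_add_card_filter_not
    (s := Finset.univ.filter (fun y : UnitriangularGroup p n =>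
      (x : UnitriangularGroup p n).2.2 * y.1 = y.2.2 * (x : UnitriangularGroup p n).1))
    (p := fun y => y ∈ Subgroup.center (UnitriangularGroup p n))
  rw [Finset.filter_filter, Finset.filter_filter] at hsplit
  have e1 : (Finset.univ.filter (fun y : UnitriangularGroup p n =>
      (x : UnitriangularGroup p n).2.2 * y.1 = y.2.2 * (x : UnitriangularGroup p n).1)).card =
      Fintype.card (GaloisField p n) * Fintype.card (GaloisField p n) := by
    rw [← Fintype.card_subtype]; exact h1
  have e2 : (Finset.univ.filter (fun y : UnitriangularGroup p n =>
      ((x : UnitriangularGroup p n).2.2 * y.1 = y.2.2 * (x : UnitriangularGroup p n).1) ∧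
        y ∈ Subgroup.center (UnitriangularGroup p n))).card =
      Fintype.card (GaloisField p n) := by
    rw [← Fintype.card_subtype]; exact h2
  have e3 : (Finset.univ.filter (fun y : UnitriangularGroup p n =>
      ((x : UnitriangularGroup p n).2.2 * y.1 = y.2.2 * (x : UnitriangularGroup p n).1) ∧
        ¬ y ∈ Subgroup.center (UnitriangularGroup p n))).card = (UT.Cf x).card := by
    rw [← Fintype.card_subtype]
    have : (UT.Cf x).card = Fintype.card {z : {g : UnitriangularGroup p n // g ∉ Subgroup.center (UnitriangularGroup p n)} //
        (x : UnitriangularGroup p n).2.2 * (z : UnitriangularGroup p n).1 =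
          (z : UnitriangularGroup p n).2.2 * (x : UnitriangularGroup p n).1} := by
      rw [UT.Cf, Fintype.card_subtype]
    rw [this]
    refine (Fintype.card_congr ?_).symm
    exact
      { toFun := fun z => ⟨z.1.1, z.2, z.1.2⟩
        invFun := fun w => ⟨⟨w.1, w.2.2⟩, w.2.1⟩
        left_inv := fun z => rfl
        right_inv := fun w => rfl }
  rw [e2, e3, e1] at hsplit
  omega

end UT2

section Spectral

open scoped Matrix

lemma trace_eq_sum_eigenvalues {V : Type*} [Fintype V] [DecidableEq V] {A : Matrix V V ℝ}
    (hA : A.IsHermitian) : Matrix.trace A = ∑ i, hA.eigenvalues i := by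
  exact hA.trace_eq_sum_eigenvalues

lemma eigenvalue_quadratic {V : Type*} [Fintype V] [DecidableEq V] {A : Matrix V V ℝ}
    (hA : A.IsHermitian) {a b : ℝ} (hsq : A * A = a • A + b • (1 : Matrix V V ℝ)) (i : V) :
    hA.eigenvalues i ^ 2 = a * hA.eigenvalues i + b := by
  have hv := hA.mulVec_eigenvectorBasis i
  have hnz : (⇑(hA.eigenvectorBasis i) : V → ℝ) ≠ 0 :=
    by simpa using hA.eigenvectorBasis.orthonormal.ne_zero i
  have h1 : (hA.eigenvalues i ^ 2) • (⇑(hA.eigenvectorBasis i) : V → ℝ) =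
      (a * hA.eigenvalues i + b) • (⇑(hA.eigenvectorBasis i) : V → ℝ) := by
    have l1 : (A * A) *ᵥ ⇑(hA.eigenvectorBasis i) =
        (hA.eigenvalues i ^ 2) • ⇑(hA.eigenvectorBasis i) := by
      rw [← Matrix.mulVec_mulVec, hv, Matrix.mulVec_smul, hv, smul_smul, sq]
    have l2 : (A * A) *ᵥ ⇑(hA.eigenvectorBasis i) =
        (a * hA.eigenvalues i + b) • ⇑(hA.eigenvectorBasis i) := by
      rw [hsq, Matrix.add_mulVec, Matrix.smul_mulVec, Matrix.smul_mulVec,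
        Matrix.one_mulVec, hv, smul_smul, add_smul]
    rw [← l1, l2]
  have h2 : (hA.eigenvalues i ^ 2 - (a * hA.eigenvalues i + b)) •
      (⇑(hA.eigenvectorBasis i) : V → ℝ) = 0 := by
    rw [sub_smul, h1, sub_self]
  rcases smul_eq_zero.mp h2 with h | h
  · linarith [h]
  · exact absurd h hnz

end Spectral

section UT3

variable {p n : ℕ} [Fact p.Prime]

lemma UT.adjMatrix_sq :
    ((commGraph (UnitriangularGroup p n)).adjMatrix ℝ) *
      ((commGraph (UnitriangularGroup p n)).adjMatrix ℝ) =
    ((Fintype.card (GaloisField p n) : ℝ) ^ 2 - (Fintype.card (GaloisField p n) : ℝ) - 2) •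
        ((commGraph (UnitriangularGroup p n)).adjMatrix ℝ) +
      ((Fintype.card (GaloisField p n) : ℝ) ^ 2 - (Fintype.card (GaloisField p n) : ℝ) - 1) •
        (1 : Matrix {g : UnitriangularGroup p n // g ∉ Subgroup.center (UnitriangularGroup p n)}
          {g : UnitriangularGroup p n // g ∉ Subgroup.center (UnitriangularGroup p n)} ℝ) := by
  classical
  have hQ2 : 2 ≤ Fintype.card (GaloisField p n) := Fintype.one_lt_card
  ext x y
  have hent : (((commGraph (UnitriangularGroup p n)).adjMatrix ℝ) *
      ((commGraph (UnitriangularGroup p n)).adjMatrix ℝ)) x y =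
      ((Finset.univ.filter (fun z => (commGraph (UnitriangularGroup p n)).Adj x z ∧
        (commGraph (UnitriangularGroup p n)).Adj z y)).card : ℝ) := by
    rw [Matrix.mul_apply, ← Finset.sum_boole]
    refine Finset.sum_congr rfl fun z _ => ?_
    by_cases h1 : (commGraph (UnitriangularGroup p n)).Adj x z <;>
      by_cases h2 : (commGraph (UnitriangularGroup p n)).Adj z y <;>
      simp [h1, h2]
  rw [hent, Matrix.add_apply, Matrix.smul_apply, Matrix.smul_apply, smul_eq_mul, smul_eq_mul]
  by_cases hxy : x = y
  · subst hxy
    have hfe : Finset.univ.filter (fun z => (commGraph (UnitriangularGroup p n)).Adj x z ∧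
        (commGraph (UnitriangularGroup p n)).Adj z x) = (UT.Cf x).erase x := by
      ext z
      simp only [Finset.mem_filter, Finset.mem_univ, true_and, Finset.mem_erase]
      rw [UT.adj_iff, UT.adj_iff, UT.mem_Cf]
      constructor
      · rintro ⟨⟨hne, hc⟩, _⟩
        exact ⟨Ne.symm hne, hc⟩
      · rintro ⟨hne, hc⟩
        exact ⟨⟨Ne.symm hne, hc⟩, ⟨hne, hc.symm⟩⟩
    have hxmem : x ∈ UT.Cf x := (UT.mem_Cf x x).mpr rfl
    have hcard : ((UT.Cf x).erase x).card + 1 = (UT.Cf x).card :=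
      Finset.card_erase_add_one hxmem
    have hC := UT.card_Cf x
    have hdiag : ((commGraph (UnitriangularGroup p n)).adjMatrix ℝ) x x = 0 := by simp
    rw [hfe, hdiag, Matrix.one_apply_eq, mul_zero, mul_one, zero_add]
    have : ((UT.Cf x).erase x).card + 1 + Fintype.card (GaloisField p n) =
        Fintype.card (GaloisField p n) * Fintype.card (GaloisField p n) := by omega
    have := congrArg (fun m : ℕ => (m : ℝ)) this
    push_cast at this
    nlinarith [this]
  · by_cases hadj : (commGraph (UnitriangularGroup p n)).Adj x y
    · obtain ⟨-, hcxy⟩ := (UT.adj_iff x y).mp hadj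
      have hfe : Finset.univ.filter (fun z => (commGraph (UnitriangularGroup p n)).Adj x z ∧
          (commGraph (UnitriangularGroup p n)).Adj z y) = ((UT.Cf x).erase x).erase y := by
        ext z
        simp only [Finset.mem_filter, Finset.mem_univ, true_and, Finset.mem_erase]
        rw [UT.adj_iff, UT.adj_iff, UT.mem_Cf]
        constructor
        · rintro ⟨⟨hne1, hc1⟩, ⟨hne2, hc2⟩⟩
          exact ⟨hne2, Ne.symm hne1, hc1⟩
        · rintro ⟨hney, hnex, hc⟩
          refine ⟨⟨Ne.symm hnex, hc⟩, hney, ?_⟩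
          exact UT.cond_trans z x y hc.symm hcxy
      have hymem : y ∈ (UT.Cf x).erase x := by
        rw [Finset.mem_erase, UT.mem_Cf]
        exact ⟨Ne.symm hxy, hcxy⟩
      have hxmem : x ∈ UT.Cf x := (UT.mem_Cf x x).mpr rfl
      have hc1 : (((UT.Cf x).erase x).erase y).card + 1 = ((UT.Cf x).erase x).card :=
        Finset.card_erase_add_one hymem
      have hc2 : ((UT.Cf x).erase x).card + 1 = (UT.Cf x).card :=
        Finset.card_erase_add_one hxmem
      have hC := UT.card_Cf x
      have hAxy : ((commGraph (UnitriangularGroup p n)).adjMatrix ℝ) x y = 1 := by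
        simp [hadj]
      rw [hfe, hAxy, Matrix.one_apply_ne hxy, mul_one, mul_zero, add_zero]
      have : (((UT.Cf x).erase x).erase y).card + 1 + 1 + Fintype.card (GaloisField p n) =
          Fintype.card (GaloisField p n) * Fintype.card (GaloisField p n) := by omega
      have := congrArg (fun m : ℕ => (m : ℝ)) this
      push_cast at this
      nlinarith [this]
    · have hfe : Finset.univ.filter (fun z => (commGraph (UnitriangularGroup p n)).Adj x z ∧
          (commGraph (UnitriangularGroup p n)).Adj z y) = ∅ := by
        rw [Finset.filter_eq_empty_iff]
        rintro z - ⟨h1, h2⟩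
        obtain ⟨-, hc1⟩ := (UT.adj_iff x z).mp h1
        obtain ⟨-, hc2⟩ := (UT.adj_iff z y).mp h2
        exact hadj ((UT.adj_iff x y).mpr ⟨hxy, UT.cond_trans x z y hc1 hc2⟩)
      have hAxy : ((commGraph (UnitriangularGroup p n)).adjMatrix ℝ) x y = 0 := by
        simp [hadj]
      rw [hfe, hAxy, Matrix.one_apply_ne hxy, mul_zero, mul_zero, add_zero]
      simp
end UT3

/-- The energy of the commuting graph of the group `A(n, p)` of all `3 × 3` lower
unitriangular matrices over `GF(p^n)`: `E = 2 p^{3n} - 4 p^n - 2`. -/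
theorem energy_commGraph_unitriangularGroup
    (p : ℕ) [Fact p.Prime] (n : ℕ) (hn : 1 ≤ n) :
    graphEnergy (commGraph (UnitriangularGroup p n)) =
      2 * (p : ℝ) ^ (3 * n) - 4 * (p : ℝ) ^ n - 2 := by
  classical
  have hn0 : n ≠ 0 := by omega
  have hQ : Fintype.card (GaloisField p n) = p ^ n := by
    rw [← Nat.card_eq_fintype_card, GaloisField.card p n hn0]
  have hQ2 : 2 ≤ Fintype.card (GaloisField p n) := Fintype.one_lt_card
  -- abbreviations
  set Q : ℕ := Fintype.card (GaloisField p n) with hQdef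
  -- cardinality of the vertex set
  have hsplitV := Finset.card_filter_add_card_filter_not
    (s := (Finset.univ : Finset (UnitriangularGroup p n)))
    (p := fun g => g ∈ Subgroup.center (UnitriangularGroup p n))
  have hcardG : (Finset.univ : Finset (UnitriangularGroup p n)).card = Q * (Q * Q) := by
    rw [Finset.card_univ]
    simp [Fintype.card_prod, hQdef]
  have hc1 : (Finset.univ.filter (fun g : UnitriangularGroup p n =>
      g ∈ Subgroup.center (UnitriangularGroup p n))).card = Q := by
    rw [← Fintype.card_subtype]; exact UT.card_center
  have hc2 : (Finset.univ.filter (fun g : UnitriangularGroup p n =>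
      ¬ g ∈ Subgroup.center (UnitriangularGroup p n))).card =
      Fintype.card {g : UnitriangularGroup p n // g ∉ Subgroup.center (UnitriangularGroup p n)} := by
    rw [← Fintype.card_subtype]
  have hN : Fintype.card {g : UnitriangularGroup p n // g ∉ Subgroup.center (UnitriangularGroup p n)}
      + Q = Q * (Q * Q) := by
    rw [hc1, hc2, hcardG] at hsplitV
    omega
  -- eigenvalue analysis
  have hquad := fun i => eigenvalue_quadratic
    (adjMatrix_isHermitian (commGraph (UnitriangularGroup p n))) UT.adjMatrix_sq i
  have hval : ∀ i, (adjMatrix_isHermitian (commGraph (UnitriangularGroup p n))).eigenvalues i =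
      (Q : ℝ) ^ 2 - Q - 1 ∨
      (adjMatrix_isHermitian (commGraph (UnitriangularGroup p n))).eigenvalues i = -1 := by
    intro i
    have h := hquad i
    have hfac : ((adjMatrix_isHermitian (commGraph (UnitriangularGroup p n))).eigenvalues i -
        ((Q : ℝ) ^ 2 - Q - 1)) *
        ((adjMatrix_isHermitian (commGraph (UnitriangularGroup p n))).eigenvalues i + 1) = 0 := by
      linear_combination h
    rcases mul_eq_zero.mp hfac with h' | h'
    · left; linarith
    · right; linarith
  have htr : ∑ i, (adjMatrix_isHermitian (commGraph (UnitriangularGroup p n))).eigenvalues i = 0 := by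
    rw [← trace_eq_sum_eigenvalues]
    exact SimpleGraph.trace_adjMatrix ℝ _
  -- split the index set
  set s := Finset.univ.filter (fun i =>
    (adjMatrix_isHermitian (commGraph (UnitriangularGroup p n))).eigenvalues i =
      (Q : ℝ) ^ 2 - Q - 1) with hs
  set t := Finset.univ.filter (fun i =>
    ¬ (adjMatrix_isHermitian (commGraph (UnitriangularGroup p n))).eigenvalues i =
      (Q : ℝ) ^ 2 - Q - 1) with ht
  have hst : s.card + t.card =
      Fintype.card {g : UnitriangularGroup p n // g ∉ Subgroup.center (UnitriangularGroup p n)} := by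
    rw [hs, ht, Finset.card_filter_add_card_filter_not, Finset.card_univ]
  have hsum_split := Finset.sum_filter_add_sum_filter_not Finset.univ
    (fun i => (adjMatrix_isHermitian (commGraph (UnitriangularGroup p n))).eigenvalues i =
      (Q : ℝ) ^ 2 - Q - 1)
    (fun i => (adjMatrix_isHermitian (commGraph (UnitriangularGroup p n))).eigenvalues i)
  have habs_split := Finset.sum_filter_add_sum_filter_not Finset.univ
    (fun i => (adjMatrix_isHermitian (commGraph (UnitriangularGroup p n))).eigenvalues i =
      (Q : ℝ) ^ 2 - Q - 1)
    (fun i => |(adjMatrix_isHermitian (commGraph (UnitriangularGroup p n))).eigenvalues i|)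
  have hQR : (2 : ℝ) ≤ (Q : ℝ) := by exact_mod_cast hQ2
  have hm1 : (0 : ℝ) ≤ (Q : ℝ) ^ 2 - Q - 1 := by nlinarith
  have hsum_s : ∑ i ∈ s, (adjMatrix_isHermitian (commGraph (UnitriangularGroup p n))).eigenvalues i
      = s.card * ((Q : ℝ) ^ 2 - Q - 1) := by
    rw [Finset.sum_congr rfl (fun i hi => (Finset.mem_filter.mp hi).2), Finset.sum_const,
      nsmul_eq_mul]
  have hsum_t : ∑ i ∈ t, (adjMatrix_isHermitian (commGraph (UnitriangularGroup p n))).eigenvalues i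
      = -(t.card : ℝ) := by
    rw [Finset.sum_congr rfl (fun i hi => ((hval i).resolve_left (Finset.mem_filter.mp hi).2)),
      Finset.sum_const, nsmul_eq_mul, mul_neg_one]
  have habs_s : ∑ i ∈ s, |(adjMatrix_isHermitian (commGraph (UnitriangularGroup p n))).eigenvalues i|
      = s.card * ((Q : ℝ) ^ 2 - Q - 1) := by
    rw [Finset.sum_congr rfl (fun i hi => by
      rw [(Finset.mem_filter.mp hi).2, abs_of_nonneg hm1]), Finset.sum_const, nsmul_eq_mul]
  have habs_t : ∑ i ∈ t, |(adjMatrix_isHermitian (commGraph (UnitriangularGroup p n))).eigenvalues i|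
      = (t.card : ℝ) := by
    rw [Finset.sum_congr rfl (fun i hi => by
      rw [(hval i).resolve_left (Finset.mem_filter.mp hi).2, abs_neg, abs_one]),
      Finset.sum_const, nsmul_eq_mul, mul_one]
  -- solve for s.card
  have hNR : (Fintype.card {g : UnitriangularGroup p n //
      g ∉ Subgroup.center (UnitriangularGroup p n)} : ℝ) = (Q : ℝ) * ((Q : ℝ) * Q) - Q := by
    have := congrArg (fun m : ℕ => (m : ℝ)) hN
    push_cast at this
    linarith
  have hstR : (s.card : ℝ) + t.card = (Q : ℝ) * ((Q : ℝ) * Q) - Q := by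
    have := congrArg (fun m : ℕ => (m : ℝ)) hst
    push_cast at this
    rw [this, hNR]
  have htr' : (s.card : ℝ) * ((Q : ℝ) ^ 2 - Q - 1) - t.card = 0 := by
    rw [← hsum_s]
    have : ∑ i ∈ t, (adjMatrix_isHermitian (commGraph (UnitriangularGroup p n))).eigenvalues i
        = -(t.card : ℝ) := hsum_t
    rw [← hsum_split] at htr
    linarith [htr, this]
  have hScard : (s.card : ℝ) = (Q : ℝ) + 1 := by
    have hne : (Q : ℝ) ^ 2 - Q ≠ 0 := by nlinarith
    have : (s.card : ℝ) * ((Q : ℝ) ^ 2 - Q) = ((Q : ℝ) + 1) * ((Q : ℝ) ^ 2 - Q) := by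
      nlinarith [htr', hstR]
    exact mul_right_cancel₀ hne this
  -- conclude
  show (∑ i, |(adjMatrix_isHermitian (commGraph (UnitriangularGroup p n))).eigenvalues i|) = _
  rw [← habs_split, habs_s, habs_t]
  have htcard : (t.card : ℝ) = (Q : ℝ) * ((Q : ℝ) * Q) - Q - ((Q : ℝ) + 1) := by
    linarith [hstR, hScard]
  have hQpow : (Q : ℝ) = (p : ℝ) ^ n := by
    rw [hQdef] at hQ ⊢
    exact_mod_cast hQ
  rw [hScard, htcard, hQpow]
  rw [mul_comm 3 n, pow_mul]
  ring
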